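/- Let H₁, H₂, H₃ be complex Hilbert spaces and let A : H₁ → H₂, U : H₃ → H₂, V : H₃ → H₁ be bounded linear operators. Assume the ranges R(A), R(S_A), and R(A + UV*) are closed, where S_A = I + V*A†U. If R(U) ⊆ R(A) and R(V) ⊆ R(A*), then the identity (A + UV*)† = (I + A†U F_{S_A} U*(A†)*)^{-1} (A† − A†U S_A† V*A†) (I + (A†)* V E_{S_A} V*A†)^{-1} holds if and only if U E_{S_A} V*A† and A†U F_{S_A} V* are both self-adjoint and A†U F_{S_A} E_{S_A} V*A† = 0. -/

import Mathlib

open ContinuousLinearMap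

/-- `Z` is the Moore–Penrose inverse of the bounded linear operator `A`. -/
def IsMPOp {E F : Type*}
    [NormedAddCommGroup E] [InnerProductSpace ℂ E] [CompleteSpace E]
    [NormedAddCommGroup F] [InnerProductSpace ℂ F] [CompleteSpace F]
    (A : E →L[ℂ] F) (Z : F →L[ℂ] E) : Prop :=
  A ∘L Z ∘L A = A ∧ Z ∘L A ∘L Z = Z ∧
    adjoint (A ∘L Z) = A ∘L Z ∧ adjoint (Z ∘L A) = Z ∘L A

private lemma auxOneComp {E F : Type*} [NormedAddCommGroup E] [NormedAddCommGroup F]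
    [NormedSpace ℂ E] [NormedSpace ℂ F] (f : E →L[ℂ] F) :
    (1 : F →L[ℂ] F) ∘L f = f := by
  rw [ContinuousLinearMap.one_def, ContinuousLinearMap.id_comp]

private lemma auxCompOne {E F : Type*} [NormedAddCommGroup E] [NormedAddCommGroup F]
    [NormedSpace ℂ E] [NormedSpace ℂ F] (f : E →L[ℂ] F) :
    f ∘L (1 : E →L[ℂ] E) = f := by
  rw [ContinuousLinearMap.one_def, ContinuousLinearMap.comp_id]

private lemma auxIsUnit {K H : Type*}
    [NormedAddCommGroup K] [InnerProductSpace ℂ K] [CompleteSpace K]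
    [NormedAddCommGroup H] [InnerProductSpace ℂ H] [CompleteSpace H]
    (C : K →L[ℂ] H) : IsUnit (1 + C ∘L adjoint C) := by
  have h : (0 : H →L[ℂ] H) ≤ C ∘L adjoint C := by
    rw [nonneg_iff_isPositive]
    simpa [auxOneComp] using (isPositive_one (E := K) (𝕜 := ℂ)).conj_adjoint C
  exact CStarAlgebra.isUnit_of_le 1 (le_add_of_nonneg_right h)

set_option maxHeartbeats 2000000 in
theorem stmt_18 {H₁ H₂ H₃ : Type*}
    [NormedAddCommGroup H₁] [InnerProductSpace ℂ H₁] [CompleteSpace H₁]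
    [NormedAddCommGroup H₂] [InnerProductSpace ℂ H₂] [CompleteSpace H₂]
    [NormedAddCommGroup H₃] [InnerProductSpace ℂ H₃] [CompleteSpace H₃]
    (A : H₁ →L[ℂ] H₂) (U : H₃ →L[ℂ] H₂) (V : H₃ →L[ℂ] H₁)
    (Adag : H₂ →L[ℂ] H₁) (hAdag : IsMPOp A Adag)
    (S : H₃ →L[ℂ] H₃) (hS : S = 1 + adjoint V ∘L Adag ∘L U)
    (Sdag : H₃ →L[ℂ] H₃) (hSdag : IsMPOp S Sdag)
    (ES : H₃ →L[ℂ] H₃) (hES : ES = 1 - S ∘L Sdag)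
    (FS : H₃ →L[ℂ] H₃) (hFS : FS = 1 - Sdag ∘L S)
    (hAclosed : IsClosed (LinearMap.range (A : H₁ →ₗ[ℂ] H₂) : Set H₂))
    (hSclosed : IsClosed (LinearMap.range (S : H₃ →ₗ[ℂ] H₃) : Set H₃))
    (hBclosed : IsClosed (LinearMap.range ((A + U ∘L adjoint V : H₁ →L[ℂ] H₂) : H₁ →ₗ[ℂ] H₂) : Set H₂))
    (hU : LinearMap.range (U : H₃ →ₗ[ℂ] H₂) ≤ LinearMap.range (A : H₁ →ₗ[ℂ] H₂))
    (hV : LinearMap.range (V : H₃ →ₗ[ℂ] H₁) ≤ LinearMap.range ((adjoint A : H₂ →L[ℂ] H₁) : H₂ →ₗ[ℂ] H₁)) :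
    IsMPOp (A + U ∘L adjoint V)
        (Ring.inverse (1 + Adag ∘L U ∘L FS ∘L adjoint U ∘L adjoint Adag) ∘L
          (Adag - Adag ∘L U ∘L Sdag ∘L adjoint V ∘L Adag) ∘L
          Ring.inverse (1 + adjoint Adag ∘L V ∘L ES ∘L adjoint V ∘L Adag)) ↔
      (adjoint (U ∘L ES ∘L adjoint V ∘L Adag) = U ∘L ES ∘L adjoint V ∘L Adag ∧
        adjoint (Adag ∘L U ∘L FS ∘L adjoint V) = Adag ∘L U ∘L FS ∘L adjoint V ∧
        Adag ∘L U ∘L FS ∘L ES ∘L adjoint V ∘L Adag = 0) := by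
  obtain ⟨hA1, hA2, hA3, hA4⟩ := hAdag
  obtain ⟨hS1, hS2, hS3, hS4⟩ := hSdag
  -- adjoint of 1
  have hone1 : adjoint (1 : H₁ →L[ℂ] H₁) = 1 := by rw [← star_eq_adjoint, star_one]
  have hone2 : adjoint (1 : H₂ →L[ℂ] H₂) = 1 := by rw [← star_eq_adjoint, star_one]
  have hone3 : adjoint (1 : H₃ →L[ℂ] H₃) = 1 := by rw [← star_eq_adjoint, star_one]
  -- pointwise rules
  have r1 : ∀ x, A (Adag (A x)) = A x := fun x => DFunLike.congr_fun hA1 x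
  have r2 : ∀ x, Adag (A (Adag x)) = Adag x := fun x => DFunLike.congr_fun hA2 x
  have hQU : (A ∘L Adag) ∘L U = U := by
    ext x
    obtain ⟨y, hy⟩ := LinearMap.mem_range.mp (hU (LinearMap.mem_range.mpr ⟨x, rfl⟩))
    simp only [comp_apply]
    rw [← show A y = U x from hy]
    exact r1 y
  have r3 : ∀ x, A (Adag (U x)) = U x := fun x => DFunLike.congr_fun hQU x
  have hPAs : (Adag ∘L A) ∘L adjoint A = adjoint A := by
    conv_lhs => rw [← hA4]
    rw [← adjoint_comp, hA1]
  have hPV : (Adag ∘L A) ∘L V = V := by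
    ext x
    obtain ⟨y, hy⟩ := LinearMap.mem_range.mp (hV (LinearMap.mem_range.mpr ⟨x, rfl⟩))
    simp only [comp_apply]
    rw [← show adjoint A y = V x from hy]
    exact DFunLike.congr_fun hPAs y
  have r4 : ∀ x, Adag (A (V x)) = V x := fun x => DFunLike.congr_fun hPV x
  have hVsP : adjoint V ∘L (Adag ∘L A) = adjoint V := by
    calc adjoint V ∘L (Adag ∘L A) = adjoint V ∘L adjoint (Adag ∘L A) := by rw [hA4]
      _ = adjoint ((Adag ∘L A) ∘L V) := (adjoint_comp _ _).symm
      _ = adjoint V := by rw [hPV]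
  have r5 : ∀ x, adjoint V (Adag (A x)) = adjoint V x := fun x => DFunLike.congr_fun hVsP x
  have hUsQ : adjoint U ∘L (A ∘L Adag) = adjoint U := by
    calc adjoint U ∘L (A ∘L Adag) = adjoint U ∘L adjoint (A ∘L Adag) := by rw [hA3]
      _ = adjoint ((A ∘L Adag) ∘L U) := (adjoint_comp _ _).symm
      _ = adjoint U := by rw [hQU]
  have r6 : ∀ x, adjoint U (A (Adag x)) = adjoint U x := fun x => DFunLike.congr_fun hUsQ x
  have hQAs : (A ∘L Adag) ∘L adjoint Adag = adjoint Adag := by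
    conv_lhs => rw [← hA3]
    rw [← adjoint_comp, hA2]
  have r7 : ∀ x, A (Adag (adjoint Adag x)) = adjoint Adag x :=
    fun x => DFunLike.congr_fun hQAs x
  have hAsP : adjoint Adag ∘L (Adag ∘L A) = adjoint Adag := by
    calc adjoint Adag ∘L (Adag ∘L A) = adjoint Adag ∘L adjoint (Adag ∘L A) := by rw [hA4]
      _ = adjoint ((Adag ∘L A) ∘L Adag) := (adjoint_comp _ _).symm
      _ = adjoint Adag := by rw [comp_assoc, hA2]
  have r8 : ∀ x, adjoint Adag (Adag (A x)) = adjoint Adag x :=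
    fun x => DFunLike.congr_fun hAsP x
  have rS1 : ∀ x, S (Sdag (S x)) = S x := fun x => DFunLike.congr_fun hS1 x
  have rS2 : ∀ x, Sdag (S (Sdag x)) = Sdag x := fun x => DFunLike.congr_fun hS2 x
  have hSsSSd : adjoint S ∘L (S ∘L Sdag) = adjoint S := by
    calc adjoint S ∘L (S ∘L Sdag) = adjoint S ∘L adjoint (S ∘L Sdag) := by rw [hS3]
      _ = adjoint ((S ∘L Sdag) ∘L S) := (adjoint_comp _ _).symm
      _ = adjoint S := by rw [comp_assoc, hS1]
  have rSa1 : ∀ x, adjoint S (S (Sdag x)) = adjoint S x := fun x => DFunLike.congr_fun hSsSSd x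
  have hSdSSs : (Sdag ∘L S) ∘L adjoint S = adjoint S := by
    conv_lhs => rw [← hS4]
    rw [← adjoint_comp, hS1]
  have rSa2 : ∀ x, Sdag (S (adjoint S x)) = adjoint S x := fun x => DFunLike.congr_fun hSdSSs x
  have hSU : adjoint V ∘L Adag ∘L U = S - 1 := by rw [hS]; abel
  have rSU : ∀ x, adjoint V (Adag (U x)) = S x - x := fun x => by
    simpa using DFunLike.congr_fun hSU x
  have hUAV : (adjoint U ∘L adjoint Adag) ∘L V = adjoint S - 1 := by
    have h := congrArg (fun f => adjoint f) hSU
    simp only [adjoint_comp, adjoint_adjoint, map_sub, hone3] at h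
    exact h
  have rUAV : ∀ x, adjoint U (adjoint Adag (V x)) = adjoint S x - x := fun x => by
    simpa using DFunLike.congr_fun hUAV x
  have rES : ∀ x, ES x = x - S (Sdag x) := fun x => by simp [hES]
  have rFS : ∀ x, FS x = x - Sdag (S x) := fun x => by simp [hFS]
  have hESsa : adjoint ES = ES := by rw [hES]; simp only [map_sub, hone3, hS3]
  have hFSsa : adjoint FS = FS := by rw [hFS]; simp only [map_sub, hone3, hS4]
  -- abbreviations
  set B := A + U ∘L adjoint V with hBdef
  set X := Adag - Adag ∘L U ∘L Sdag ∘L adjoint V ∘L Adag with hXdef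
  set M := 1 + Adag ∘L U ∘L FS ∘L adjoint U ∘L adjoint Adag with hMdef
  set N := 1 + adjoint Adag ∘L V ∘L ES ∘L adjoint V ∘L Adag with hNdef
  set T := U ∘L ES ∘L adjoint V ∘L Adag with hTdef
  set W := Adag ∘L U ∘L FS ∘L adjoint V with hWdef
  set G0 := Adag ∘L U ∘L FS ∘L ES ∘L adjoint V ∘L Adag with hG0def
  -- main algebraic identities
  have I1 : B ∘L X = A ∘L Adag + T := by
    ext x
    simp only [hBdef, hXdef, hTdef, hWdef, hG0def, hMdef, hNdef, comp_apply, add_apply, sub_apply,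
      one_apply, zero_apply, map_add, map_sub, map_zero, rES, rFS, rSU, rUAV, r1, r2, r3, r4,
      r5, r6, r7, r8, rS1, rS2, rSa1, rSa2]
    abel
  have I2 : X ∘L B = Adag ∘L A + W := by
    ext x
    simp only [hBdef, hXdef, hTdef, hWdef, hG0def, hMdef, hNdef, comp_apply, add_apply, sub_apply,
      one_apply, zero_apply, map_add, map_sub, map_zero, rES, rFS, rSU, rUAV, r1, r2, r3, r4,
      r5, r6, r7, r8, rS1, rS2, rSa1, rSa2]
    abel
  have I3 : B ∘L (Adag ∘L A + W) = B := by
    ext x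
    simp only [hBdef, hXdef, hTdef, hWdef, hG0def, hMdef, hNdef, comp_apply, add_apply, sub_apply,
      one_apply, zero_apply, map_add, map_sub, map_zero, rES, rFS, rSU, rUAV, r1, r2, r3, r4,
      r5, r6, r7, r8, rS1, rS2, rSa1, rSa2]
    abel
  have I4 : X ∘L (A ∘L Adag + T) = X + G0 := by
    ext x
    simp only [hBdef, hXdef, hTdef, hWdef, hG0def, hMdef, hNdef, comp_apply, add_apply, sub_apply,
      one_apply, zero_apply, map_add, map_sub, map_zero, rES, rFS, rSU, rUAV, r1, r2, r3, r4,
      r5, r6, r7, r8, rS1, rS2, rSa1, rSa2]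
    abel
  have I5 : B ∘L M = B := by
    ext x
    simp only [hBdef, hXdef, hTdef, hWdef, hG0def, hMdef, hNdef, comp_apply, add_apply, sub_apply,
      one_apply, zero_apply, map_add, map_sub, map_zero, rES, rFS, rSU, rUAV, r1, r2, r3, r4,
      r5, r6, r7, r8, rS1, rS2, rSa1, rSa2]
    abel
  have I6 : N ∘L B = B := by
    ext x
    simp only [hBdef, hXdef, hTdef, hWdef, hG0def, hMdef, hNdef, comp_apply, add_apply, sub_apply,
      one_apply, zero_apply, map_add, map_sub, map_zero, rES, rFS, rSU, rUAV, r1, r2, r3, r4,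
      r5, r6, r7, r8, rS1, rS2, rSa1, rSa2]
    abel
  have I7 : N ∘L (A ∘L Adag + T) = A ∘L Adag + T := by
    ext x
    simp only [hBdef, hXdef, hTdef, hWdef, hG0def, hMdef, hNdef, comp_apply, add_apply, sub_apply,
      one_apply, zero_apply, map_add, map_sub, map_zero, rES, rFS, rSU, rUAV, r1, r2, r3, r4,
      r5, r6, r7, r8, rS1, rS2, rSa1, rSa2]
    abel
  have I8 : (A ∘L Adag + ((adjoint Adag ∘L V) ∘L ES) ∘L adjoint U) ∘L N
      = A ∘L Adag + ((adjoint Adag ∘L V) ∘L ES) ∘L adjoint U := by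
    ext x
    simp only [hBdef, hXdef, hTdef, hWdef, hG0def, hMdef, hNdef, comp_apply, add_apply, sub_apply,
      one_apply, zero_apply, map_add, map_sub, map_zero, rES, rFS, rSU, rUAV, r1, r2, r3, r4,
      r5, r6, r7, r8, rS1, rS2, rSa1, rSa2]
    abel
  have I9 : (Adag ∘L A + W) ∘L M = Adag ∘L A + W := by
    ext x
    simp only [hBdef, hXdef, hTdef, hWdef, hG0def, hMdef, hNdef, comp_apply, add_apply, sub_apply,
      one_apply, zero_apply, map_add, map_sub, map_zero, rES, rFS, rSU, rUAV, r1, r2, r3, r4,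
      r5, r6, r7, r8, rS1, rS2, rSa1, rSa2]
    abel
  have I10 : M ∘L (Adag ∘L A + ((V ∘L FS) ∘L adjoint U) ∘L adjoint Adag)
      = Adag ∘L A + ((V ∘L FS) ∘L adjoint U) ∘L adjoint Adag := by
    ext x
    simp only [hBdef, hXdef, hTdef, hWdef, hG0def, hMdef, hNdef, comp_apply, add_apply, sub_apply,
      one_apply, zero_apply, map_add, map_sub, map_zero, rES, rFS, rSU, rUAV, r1, r2, r3, r4,
      r5, r6, r7, r8, rS1, rS2, rSa1, rSa2]
    abel
  -- adjoints of T and W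
  have hTs : adjoint T = ((adjoint Adag ∘L V) ∘L ES) ∘L adjoint U := by
    rw [hTdef]
    simp only [adjoint_comp, adjoint_adjoint, hESsa]
  have hWs : adjoint W = ((V ∘L FS) ∘L adjoint U) ∘L adjoint Adag := by
    rw [hWdef]
    simp only [adjoint_comp, adjoint_adjoint, hFSsa]
  -- invertibility of M and N
  have hMC : M = 1 + (Adag ∘L U ∘L FS) ∘L adjoint (Adag ∘L U ∘L FS) := by
    rw [hMdef]
    simp only [adjoint_comp, adjoint_adjoint, hFSsa]
    congr 1
    ext x
    simp only [comp_apply, rFS, map_sub, rS1, rS2]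
    abel
  have hNC : N = 1 + (adjoint Adag ∘L V ∘L ES) ∘L adjoint (adjoint Adag ∘L V ∘L ES) := by
    rw [hNdef]
    simp only [adjoint_comp, adjoint_adjoint, hESsa]
    congr 1
    ext x
    simp only [comp_apply, rES, map_sub, rS1, rS2]
    abel
  have hMu : IsUnit M := by rw [hMC]; exact auxIsUnit _
  have hNu : IsUnit N := by rw [hNC]; exact auxIsUnit _
  have hMsa : adjoint M = M := by
    rw [hMdef]
    simp only [map_add, hone1, adjoint_comp, adjoint_adjoint, hFSsa, comp_assoc]
  have hNsa : adjoint N = N := by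
    rw [hNdef]
    simp only [map_add, hone2, adjoint_comp, adjoint_adjoint, hESsa, comp_assoc]
  set Minv := Ring.inverse M with hMinvdef
  set Ninv := Ring.inverse N with hNinvdef
  have hMMinvM : M * Minv = 1 := Ring.mul_inverse_cancel M hMu
  have hMinvMM : Minv * M = 1 := Ring.inverse_mul_cancel M hMu
  have hNNinvM : N * Ninv = 1 := Ring.mul_inverse_cancel N hNu
  have hNinvNM : Ninv * N = 1 := Ring.inverse_mul_cancel N hNu
  have hMMinvC : M ∘L Minv = 1 := by rw [← mul_def]; exact hMMinvM
  have hMinvMC : Minv ∘L M = 1 := by rw [← mul_def]; exact hMinvMM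
  have hNNinvC : N ∘L Ninv = 1 := by rw [← mul_def]; exact hNNinvM
  have hNinvNC : Ninv ∘L N = 1 := by rw [← mul_def]; exact hNinvNM
  have hMsa' : star M = M := by rw [star_eq_adjoint]; exact hMsa
  have hNsa' : star N = N := by rw [star_eq_adjoint]; exact hNsa
  have hMinvsa : adjoint Minv = Minv := by
    rw [← star_eq_adjoint]
    have h1 : star Minv * M = 1 := by
      conv_lhs => rw [← hMsa']
      rw [← star_mul, hMMinvM, star_one]
    calc star Minv = star Minv * (M * Minv) := by rw [hMMinvM, mul_one]
      _ = star Minv * M * Minv := by rw [mul_assoc]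
      _ = Minv := by rw [h1, one_mul]
  have hNinvsa : adjoint Ninv = Ninv := by
    rw [← star_eq_adjoint]
    have h1 : star Ninv * N = 1 := by
      conv_lhs => rw [← hNsa']
      rw [← star_mul, hNNinvM, star_one]
    calc star Ninv = star Ninv * (N * Ninv) := by rw [hNNinvM, mul_one]
      _ = star Ninv * N * Ninv := by rw [mul_assoc]
      _ = Ninv := by rw [h1, one_mul]
  set Z := Minv ∘L X ∘L Ninv with hZdef
  -- assembled facts
  have hBMinv : B ∘L Minv = B := by
    conv_lhs => rw [← I5]
    rw [comp_assoc, hMMinvC, auxCompOne]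
  have hNinvB : Ninv ∘L B = B := by
    conv_lhs => rw [← I6]
    rw [← comp_assoc, hNinvNC, auxOneComp]
  have hBZ : B ∘L Z = (A ∘L Adag + T) ∘L Ninv := by
    rw [hZdef, ← comp_assoc, hBMinv, ← comp_assoc, I1]
  have hZB : Z ∘L B = Minv ∘L (Adag ∘L A + W) := by
    rw [hZdef, comp_assoc, comp_assoc, hNinvB, I2]
  have hNinvQT : Ninv ∘L (A ∘L Adag + T) = A ∘L Adag + T := by
    conv_lhs => rw [← I7]
    rw [← comp_assoc, hNinvNC, auxOneComp]
  have MP1 : B ∘L Z ∘L B = B := by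
    rw [hZB, ← comp_assoc, hBMinv, I3]
  have MP2 : Z ∘L B ∘L Z = Z + Minv ∘L (G0 ∘L Ninv) := by
    rw [hBZ, hZdef]
    rw [comp_assoc Minv (X ∘L Ninv) _]
    rw [comp_assoc X Ninv _]
    rw [← comp_assoc Ninv _ Ninv]
    rw [hNinvQT]
    rw [← comp_assoc X _ Ninv]
    rw [I4]
    rw [add_comp, comp_add]
  have MP2iff : (Z ∘L B ∘L Z = Z) ↔ G0 = 0 := by
    constructor
    · intro h
      rw [MP2] at h
      have h0 : Minv ∘L (G0 ∘L Ninv) = 0 := add_eq_left.mp h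
      have e : M ∘L ((Minv ∘L (G0 ∘L Ninv)) ∘L N) = G0 := by
        simp only [← comp_assoc]
        rw [hMMinvC, auxOneComp, comp_assoc, hNinvNC, auxCompOne]
      rw [← e, h0, zero_comp, comp_zero]
    · intro h
      rw [MP2, h, zero_comp, comp_zero, add_zero]
  have MP3iff : (adjoint (B ∘L Z) = B ∘L Z) ↔ adjoint T = T := by
    have hBZadj : adjoint (B ∘L Z)
        = Ninv ∘L (A ∘L Adag + ((adjoint Adag ∘L V) ∘L ES) ∘L adjoint U) := by
      rw [hBZ, adjoint_comp, hNinvsa, map_add, hA3, hTs]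
    constructor
    · intro h
      rw [hBZadj, hBZ] at h
      have e1 : A ∘L Adag + ((adjoint Adag ∘L V) ∘L ES) ∘L adjoint U
          = N ∘L ((A ∘L Adag + T) ∘L Ninv) := by
        conv_lhs => rw [← auxOneComp (A ∘L Adag + ((adjoint Adag ∘L V) ∘L ES) ∘L adjoint U),
          ← hNNinvC]
        rw [comp_assoc, h]
      have e2 : A ∘L Adag + ((adjoint Adag ∘L V) ∘L ES) ∘L adjoint U = A ∘L Adag + T := by
        conv_lhs => rw [← I8]
        rw [e1, comp_assoc, comp_assoc, hNinvNC, auxCompOne, I7]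
      exact hTs.trans (add_left_cancel e2)
    · intro hc
      have hTsT : ((adjoint Adag ∘L V) ∘L ES) ∘L adjoint U = T := hTs.symm.trans hc
      rw [hBZadj, hBZ, hTsT, hNinvQT]
      have I8' : (A ∘L Adag + T) ∘L N = A ∘L Adag + T := by rw [← hTsT]; exact I8
      have r : (A ∘L Adag + T) ∘L Ninv = A ∘L Adag + T := by
        conv_lhs => rw [← I8']
        rw [comp_assoc, hNNinvC, auxCompOne]
      rw [r]
  have MP4iff : (adjoint (Z ∘L B) = Z ∘L B) ↔ adjoint W = W := by
    have hZBadj : adjoint (Z ∘L B)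
        = (Adag ∘L A + ((V ∘L FS) ∘L adjoint U) ∘L adjoint Adag) ∘L Minv := by
      rw [hZB, adjoint_comp, hMinvsa, map_add, hA4, hWs]
    constructor
    · intro h
      rw [hZBadj, hZB] at h
      have e1 : Adag ∘L A + ((V ∘L FS) ∘L adjoint U) ∘L adjoint Adag
          = (Minv ∘L (Adag ∘L A + W)) ∘L M := by
        conv_lhs => rw [← auxCompOne (Adag ∘L A + ((V ∘L FS) ∘L adjoint U) ∘L adjoint Adag),
          ← hMinvMC]
        rw [← comp_assoc, h]
      have e2 : Adag ∘L A + ((V ∘L FS) ∘L adjoint U) ∘L adjoint Adag = Adag ∘L A + W := by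
        conv_lhs => rw [← I10]
        rw [e1, ← comp_assoc, ← comp_assoc, hMMinvC, auxOneComp, I9]
      exact hWs.trans (add_left_cancel e2)
    · intro hc
      have hWsW : ((V ∘L FS) ∘L adjoint U) ∘L adjoint Adag = W := hWs.symm.trans hc
      rw [hZBadj, hZB, hWsW]
      have I10' : M ∘L (Adag ∘L A + W) = Adag ∘L A + W := by rw [← hWsW]; exact I10
      have rr : Minv ∘L (Adag ∘L A + W) = Adag ∘L A + W := by
        conv_lhs => rw [← I10']
        rw [← comp_assoc, hMinvMC, auxOneComp]
      have ll : (Adag ∘L A + W) ∘L Minv = Adag ∘L A + W := by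
        conv_lhs => rw [← I9]
        rw [comp_assoc, hMMinvC, auxCompOne]
      rw [rr, ll]
  unfold IsMPOp
  constructor
  · rintro ⟨-, m2, m3, m4⟩
    exact ⟨MP3iff.mp m3, MP4iff.mp m4, MP2iff.mp m2⟩
  · rintro ⟨c1, c2, c3⟩
    exact ⟨MP1, MP2iff.mpr c3, MP3iff.mpr c1, MP4iff.mpr c2⟩
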